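/- For any p = (p_0,...,p_k) ∈ [0,1]^{k+1} with p_0 = 0, p_k = 1: (1/k)∫_0^1 Ĉ(w,p) · 1/(π√(w(1-w))) dw ≥ 2/(k² π² ln 2), where Ĉ(w,p) = ∑_z α_z(w) d_2(p_z ‖ ∑_{z'} α_{z'}(w) p_{z'}) and α_z(w) = C(k,z) w^z (1-w)^{k-z}. -/

import Mathlib

open Finset

/-- Binomial pmf: α_z(w) = C(k,z) w^z (1-w)^{k-z}. -/
noncomputable def alph (k z : ℕ) (w : ℝ) : ℝ :=
  (k.choose z : ℝ) * w ^ z * (1 - w) ^ (k - z)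

/-- Binary KL divergence in bits. -/
noncomputable def d2 (p q : ℝ) : ℝ :=
  p * Real.logb 2 (p / q) + (1 - p) * Real.logb 2 ((1 - p) / (1 - q))

/-- The payoff Ĉ(w,p) expressed as an average divergence. -/
noncomputable def Chat (k : ℕ) (w : ℝ) (p : ℕ → ℝ) : ℝ :=
  ∑ z ∈ Finset.range (k + 1),
    alph k z w * d2 (p z) (∑ z' ∈ Finset.range (k + 1), alph k z' w * p z')

section Pinsker


noncomputable def klF (p x : ℝ) : ℝ :=
  p * Real.log (p / x) + (1 - p) * Real.log ((1 - p) / (1 - x)) - 2 * (p - x) ^ 2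

lemma klF_self (p : ℝ) : klF p p = 0 := by
  rcases eq_or_ne p 0 with h | h
  · simp [klF, h]
  · rcases eq_or_ne p 1 with h1 | h1
    · simp [klF, h1]
    · have : (1:ℝ) - p ≠ 0 := by intro hc; apply h1; linarith
      simp [klF, div_self h, div_self this]

lemma cont_term (c : ℝ) (hc : 0 ≤ c) {s : Set ℝ} {g : ℝ → ℝ} (hg : ContinuousOn g s)
    (hpos : ∀ x ∈ s, c ≠ 0 → 0 < g x) :
    ContinuousOn (fun y => c * Real.log (c / g y)) s := by
  rcases eq_or_lt_of_le hc with h | h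
  · simp only [← h, zero_mul]
    exact continuousOn_const
  · refine continuousOn_const.mul (Real.continuousOn_log.comp
      (continuousOn_const.div hg (fun x hx => ne_of_gt (hpos x hx (ne_of_gt h)))) ?_)
    intro x hx
    exact ne_of_gt (div_pos h (hpos x hx (ne_of_gt h)))

lemma klF_continuousOn (p : ℝ) (hp0 : 0 ≤ p) (hp1 : p ≤ 1) {s : Set ℝ}
    (h1 : ∀ x ∈ s, p ≠ 0 → 0 < x) (h2 : ∀ x ∈ s, p ≠ 1 → x < 1) :
    ContinuousOn (klF p) s := by
  unfold klF
  refine ContinuousOn.sub (ContinuousOn.add ?_ ?_) ?_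
  · exact cont_term p hp0 continuousOn_id h1
  · refine cont_term (1 - p) (by linarith) (continuousOn_const.sub continuousOn_id) ?_
    intro x hx hne
    have : p ≠ 1 := by intro hc; apply hne; rw [hc]; ring
    have := h2 x hx this
    simp only [Set.mem_setOf_eq, id_eq, sub_pos] at *
    linarith
  · exact continuousOn_const.mul ((continuousOn_const.sub continuousOn_id).pow 2)

lemma klF_hasDerivAt (p : ℝ) (hp0 : 0 ≤ p) (hp1 : p ≤ 1) {x : ℝ} (hx0 : 0 < x) (hx1 : x < 1) :
    HasDerivAt (klF p) ((x - p) * (1 - 4 * (x * (1 - x))) / (x * (1 - x))) x := by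
  have h1x : (0:ℝ) < 1 - x := by linarith
  have e1 : (fun y => p * Real.log (p / y)) =ᶠ[nhds x] fun y => p * Real.log p - p * Real.log y := by
    filter_upwards [eventually_gt_nhds hx0] with y hy
    rcases eq_or_lt_of_le hp0 with h | h
    · simp [← h]
    · rw [Real.log_div (ne_of_gt h) (ne_of_gt hy)]; ring
  have d1 : HasDerivAt (fun y => p * Real.log (p / y)) (-(p / x)) x := by
    have : HasDerivAt (fun y => p * Real.log p - p * Real.log y) (0 - p * x⁻¹) x :=
      (hasDerivAt_const _ _).sub ((Real.hasDerivAt_log (ne_of_gt hx0)).const_mul p)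
    refine HasDerivAt.congr_of_eventuallyEq ?_ e1
    exact this.congr_deriv (by ring)
  have e2 : (fun y => (1 - p) * Real.log ((1 - p) / (1 - y))) =ᶠ[nhds x]
      fun y => (1 - p) * Real.log (1 - p) - (1 - p) * Real.log (1 - y) := by
    filter_upwards [eventually_lt_nhds hx1] with y hy
    have h1y : (0:ℝ) < 1 - y := by linarith
    rcases eq_or_lt_of_le hp1 with h | h
    · simp [h]
    · have : (0:ℝ) < 1 - p := by linarith
      rw [Real.log_div (ne_of_gt this) (ne_of_gt h1y)]; ring
  have d2' : HasDerivAt (fun y => (1 - p) * Real.log ((1 - p) / (1 - y))) ((1 - p) / (1 - x)) x := by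
    have hinner : HasDerivAt (fun y : ℝ => 1 - y) (-1) x := by
      simpa using (hasDerivAt_id x).const_sub (1:ℝ)
    have dlog : HasDerivAt (fun y : ℝ => Real.log (1 - y)) ((1 - x)⁻¹ * (-1)) x :=
      (Real.hasDerivAt_log (ne_of_gt h1x)).comp x hinner
    have : HasDerivAt (fun y => (1 - p) * Real.log (1 - p) - (1 - p) * Real.log (1 - y))
        (0 - (1 - p) * ((1 - x)⁻¹ * (-1))) x :=
      (hasDerivAt_const _ _).sub (dlog.const_mul (1 - p))
    refine HasDerivAt.congr_of_eventuallyEq ?_ e2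
    exact this.congr_deriv (by ring)
  have d3 : HasDerivAt (fun y : ℝ => 2 * (p - y) ^ 2) (2 * ((2:ℕ) * (p - x) ^ 1 * (-1))) x := by
    have hin : HasDerivAt (fun y : ℝ => (p - y)) (-1) x := by
      simpa using (hasDerivAt_id x).const_sub p
    exact (hin.pow 2).const_mul 2
  have := (d1.add d2').sub d3
  refine this.congr_deriv ?_
  field_simp [hx0.ne', h1x.ne']
  ring

lemma klF_nonneg {p q : ℝ} (hp0 : 0 ≤ p) (hp1 : p ≤ 1) (hq0 : 0 < q) (hq1 : q < 1) :
    0 ≤ klF p q := by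
  rcases le_or_gt p q with h | h
  · have mono : MonotoneOn (klF p) (Set.Icc p q) := by
      apply monotoneOn_of_deriv_nonneg (convex_Icc p q)
      · exact klF_continuousOn p hp0 hp1
          (fun x hx hne => lt_of_lt_of_le (lt_of_le_of_ne hp0 (Ne.symm hne)) hx.1)
          (fun x hx _ => lt_of_le_of_lt hx.2 hq1)
      · intro x hx
        rw [interior_Icc] at hx
        have hx0 : 0 < x := lt_of_le_of_lt hp0 hx.1
        have hx1 : x < 1 := lt_trans hx.2 hq1
        exact (klF_hasDerivAt p hp0 hp1 hx0 hx1).differentiableAt.differentiableWithinAt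
      · intro x hx
        rw [interior_Icc] at hx
        have hx0 : 0 < x := lt_of_le_of_lt hp0 hx.1
        have hx1 : x < 1 := lt_trans hx.2 hq1
        rw [(klF_hasDerivAt p hp0 hp1 hx0 hx1).deriv]
        apply div_nonneg _ (by nlinarith)
        have h4 : 0 ≤ 1 - 4 * (x * (1 - x)) := by nlinarith [sq_nonneg (2 * x - 1)]
        have : 0 ≤ x - p := by linarith [hx.1]
        positivity
    have := mono (Set.left_mem_Icc.2 h) (Set.right_mem_Icc.2 h) h
    rwa [klF_self] at this
  · have anti : AntitoneOn (klF p) (Set.Icc q p) := by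
      apply antitoneOn_of_deriv_nonpos (convex_Icc q p)
      · exact klF_continuousOn p hp0 hp1
          (fun x hx _ => lt_of_lt_of_le hq0 hx.1)
          (fun x hx hne => lt_of_le_of_lt hx.2 (lt_of_le_of_ne hp1 hne))
      · intro x hx
        rw [interior_Icc] at hx
        have hx0 : 0 < x := lt_trans hq0 hx.1
        have hx1 : x < 1 := lt_of_lt_of_le hx.2 hp1
        exact (klF_hasDerivAt p hp0 hp1 hx0 hx1).differentiableAt.differentiableWithinAt
      · intro x hx
        rw [interior_Icc] at hx
        have hx0 : 0 < x := lt_trans hq0 hx.1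
        have hx1 : x < 1 := lt_of_lt_of_le hx.2 hp1
        rw [(klF_hasDerivAt p hp0 hp1 hx0 hx1).deriv]
        apply div_nonpos_of_nonpos_of_nonneg _ (by nlinarith)
        have h4 : 0 ≤ 1 - 4 * (x * (1 - x)) := by nlinarith [sq_nonneg (2 * x - 1)]
        have : x - p ≤ 0 := by linarith [hx.2]
        exact mul_nonpos_of_nonpos_of_nonneg this h4
    have := anti (Set.left_mem_Icc.2 h.le) (Set.right_mem_Icc.2 h.le) h.le
    rwa [klF_self] at this

lemma pinsker {p q : ℝ} (hp0 : 0 ≤ p) (hp1 : p ≤ 1) (hq0 : 0 < q) (hq1 : q < 1) :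
    2 * (p - q) ^ 2 ≤ p * Real.log (p / q) + (1 - p) * Real.log ((1 - p) / (1 - q)) := by
  have := klF_nonneg hp0 hp1 hq0 hq1
  unfold klF at this
  linarith

end Pinsker

section Bern
open Polynomial

open Finset Polynomial


lemma alph_eval (k z : ℕ) (w : ℝ) : (bernsteinPolynomial ℝ k z).eval w = alph k z w := by
  simp [bernsteinPolynomial, alph]

lemma alph_nonneg {k z : ℕ} {w : ℝ} (h0 : 0 ≤ w) (h1 : w ≤ 1) : 0 ≤ alph k z w := by
  have : 0 ≤ 1 - w := by linarith
  unfold alph; positivity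

lemma sum_alph (k : ℕ) (w : ℝ) : ∑ z ∈ range (k + 1), alph k z w = 1 := by
  have := bernsteinPolynomial.sum ℝ k
  have h := congrArg (Polynomial.eval w) this
  simpa [Polynomial.eval_finset_sum, alph_eval] using h

lemma sum_z_alph (k : ℕ) (w : ℝ) :
    ∑ z ∈ range (k + 1), (z : ℝ) * alph k z w = k * w := by
  have := bernsteinPolynomial.sum_smul ℝ k
  have h := congrArg (Polynomial.eval w) this
  simpa [Polynomial.eval_finset_sum, alph_eval] using h

lemma sum_sq_alph (k : ℕ) (w : ℝ) :
    ∑ z ∈ range (k + 1), ((k : ℝ) * w - z) ^ 2 * alph k z w = k * w * (1 - w) := by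
  have := bernsteinPolynomial.variance ℝ k
  have h := congrArg (Polynomial.eval w) this
  simpa [Polynomial.eval_finset_sum, alph_eval] using h

lemma alph_hasDerivAt (k z : ℕ) (w : ℝ) :
    HasDerivAt (fun x => alph k z x)
      ((k.choose z : ℝ) * ((z : ℝ) * w ^ (z - 1) * (1 - w) ^ (k - z)
        - ((k - z : ℕ) : ℝ) * w ^ z * (1 - w) ^ (k - z - 1))) w := by
  have h1 : HasDerivAt (fun x : ℝ => x ^ z) ((z : ℝ) * w ^ (z - 1)) w := hasDerivAt_pow z w
  have hin : HasDerivAt (fun x : ℝ => 1 - x) (-1) w := by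
    simpa using (hasDerivAt_id w).const_sub (1:ℝ)
  have h2 : HasDerivAt (fun x : ℝ => (1 - x) ^ (k - z))
      ((((k - z : ℕ) : ℝ) * (1 - w) ^ (k - z - 1)) * (-1)) w :=
    (hasDerivAt_pow (k - z) (1 - w)).comp w hin
  have := (h1.mul h2).const_mul (k.choose z : ℝ)
  refine (this.congr_deriv (by ring)).congr_of_eventuallyEq (Filter.Eventually.of_forall fun x => ?_)
  simp only [Pi.mul_apply]; unfold alph; ring

lemma bern_deriv_eval {k z : ℕ} (hk : 1 ≤ k) (hz : z ≤ k) (w : ℝ) :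
    w * (1 - w) * (Polynomial.derivative (bernsteinPolynomial ℝ k z)).eval w
      = ((z : ℝ) - k * w) * alph k z w := by
  have hderiv : (Polynomial.derivative (bernsteinPolynomial ℝ k z)).eval w
      = (k.choose z : ℝ) * ((z : ℝ) * w ^ (z - 1) * (1 - w) ^ (k - z)
        - ((k - z : ℕ) : ℝ) * w ^ z * (1 - w) ^ (k - z - 1)) := by
    rw [← Polynomial.deriv]
    have : (fun x => (bernsteinPolynomial ℝ k z).eval x) = fun x => alph k z x := by
      funext x; exact alph_eval k z x
    rw [this]
    exact (alph_hasDerivAt k z w).deriv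
  rw [hderiv]
  unfold alph
  obtain ⟨m, hm⟩ : ∃ m, k = z + m := ⟨k - z, by omega⟩
  subst hm
  simp only [Nat.add_sub_cancel_left]
  rcases Nat.eq_zero_or_pos z with hz0 | hz0
  · subst hz0
    rcases Nat.eq_zero_or_pos m with hm0 | hm0
    · omega
    · obtain ⟨b, rfl⟩ : ∃ b, m = b + 1 := ⟨m - 1, by omega⟩
      simp only [Nat.add_sub_cancel]
      push_cast
      ring
  · obtain ⟨a, rfl⟩ : ∃ a, z = a + 1 := ⟨z - 1, by omega⟩
    simp only [Nat.add_sub_cancel]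
    rcases Nat.eq_zero_or_pos m with hm0 | hm0
    · subst hm0
      simp only [Nat.zero_sub, pow_zero, Nat.cast_zero]
      push_cast
      ring
    · obtain ⟨b, rfl⟩ : ∃ b, m = b + 1 := ⟨m - 1, by omega⟩
      simp only [Nat.add_sub_cancel]
      push_cast
      ring

noncomputable def Qpoly (k : ℕ) (p : ℕ → ℝ) : Polynomial ℝ :=
  ∑ z ∈ range (k + 1), Polynomial.C (p z) * bernsteinPolynomial ℝ k z

noncomputable def qf (k : ℕ) (p : ℕ → ℝ) (w : ℝ) : ℝ := (Qpoly k p).eval w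

noncomputable def qd (k : ℕ) (p : ℕ → ℝ) (w : ℝ) : ℝ :=
  (Polynomial.derivative (Qpoly k p)).eval w

lemma qf_eq (k : ℕ) (p : ℕ → ℝ) (w : ℝ) :
    qf k p w = ∑ z ∈ range (k + 1), alph k z w * p z := by
  unfold qf Qpoly
  rw [Polynomial.eval_finset_sum]
  refine Finset.sum_congr rfl fun z _ => ?_
  rw [Polynomial.eval_mul, Polynomial.eval_C, alph_eval]
  ring

lemma qd_cov {k : ℕ} (hk : 1 ≤ k) (p : ℕ → ℝ) (w : ℝ) :
    w * (1 - w) * qd k p w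
      = ∑ z ∈ range (k + 1), ((z : ℝ) - k * w) * (alph k z w * p z) := by
  unfold qd Qpoly
  rw [derivative_sum]
  rw [Polynomial.eval_finset_sum, Finset.mul_sum]
  refine Finset.sum_congr rfl fun z hz => ?_
  rw [Polynomial.derivative_C_mul, Polynomial.eval_mul, Polynomial.eval_C]
  have hz' : z ≤ k := by simpa [Nat.lt_succ_iff] using hz
  have := bern_deriv_eval hk hz' w
  calc w * (1 - w) * (p z * (Polynomial.derivative (bernsteinPolynomial ℝ k z)).eval w)
      = p z * (w * (1 - w) * (Polynomial.derivative (bernsteinPolynomial ℝ k z)).eval w) := by ring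
    _ = p z * (((z : ℝ) - k * w) * alph k z w) := by rw [this]
    _ = ((z : ℝ) - k * w) * (alph k z w * p z) := by ring

lemma var_lower {k : ℕ} (hk : 1 ≤ k) (p : ℕ → ℝ) {w : ℝ} (hw0 : 0 < w) (hw1 : w < 1) :
    w * (1 - w) * (qd k p w) ^ 2 / k
      ≤ ∑ z ∈ range (k + 1), alph k z w * (p z - qf k p w) ^ 2 := by
  set q := qf k p w with hq
  have hα : ∀ z, 0 ≤ alph k z w := fun z => alph_nonneg hw0.le hw1.le
  have cov : ∑ z ∈ range (k + 1), (Real.sqrt (alph k z w) * (p z - q))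
      * (Real.sqrt (alph k z w) * ((z : ℝ) - k * w)) = w * (1 - w) * qd k p w := by
    rw [qd_cov hk p w]
    have : ∀ z ∈ range (k + 1), (Real.sqrt (alph k z w) * (p z - q))
        * (Real.sqrt (alph k z w) * ((z : ℝ) - k * w))
        = ((z : ℝ) - k * w) * (alph k z w * p z) - ((z : ℝ) - k * w) * alph k z w * q := by
      intro z _
      rw [show (Real.sqrt (alph k z w) * (p z - q))
          * (Real.sqrt (alph k z w) * ((z : ℝ) - k * w))
          = (Real.sqrt (alph k z w) * Real.sqrt (alph k z w)) * ((p z - q) * ((z : ℝ) - k * w))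
          from by ring, Real.mul_self_sqrt (hα z)]
      ring
    rw [Finset.sum_congr rfl this, Finset.sum_sub_distrib]
    have hzero : ∑ z ∈ range (k + 1), ((z : ℝ) - k * w) * alph k z w * q = 0 := by
      have h1 : ∑ z ∈ range (k + 1), ((z : ℝ) - k * w) * alph k z w * q
          = (∑ z ∈ range (k + 1), (z : ℝ) * alph k z w) * q
            - (k * w * q) * ∑ z ∈ range (k + 1), alph k z w := by
        rw [Finset.sum_mul, Finset.mul_sum, ← Finset.sum_sub_distrib]
        exact Finset.sum_congr rfl fun z _ => by ring
      rw [h1, sum_z_alph, sum_alph]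
      ring
    rw [hzero, sub_zero]
  have cs := Finset.sum_mul_sq_le_sq_mul_sq (range (k + 1))
    (fun z => Real.sqrt (alph k z w) * (p z - q))
    (fun z => Real.sqrt (alph k z w) * ((z : ℝ) - k * w))
  rw [cov] at cs
  have hf2 : ∀ z ∈ range (k + 1), (Real.sqrt (alph k z w) * (p z - q)) ^ 2
      = alph k z w * (p z - q) ^ 2 := by
    intro z _
    rw [mul_pow, Real.sq_sqrt (hα z)]
  have hg2 : ∀ z ∈ range (k + 1), (Real.sqrt (alph k z w) * ((z : ℝ) - k * w)) ^ 2
      = ((k : ℝ) * w - z) ^ 2 * alph k z w := by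
    intro z _
    rw [mul_pow, Real.sq_sqrt (hα z)]
    ring_nf
  rw [Finset.sum_congr rfl hf2, Finset.sum_congr rfl hg2, sum_sq_alph] at cs
  have hkpos : (0:ℝ) < k := by exact_mod_cast hk
  have hden : 0 < (k:ℝ) * w * (1 - w) := by
    apply mul_pos (mul_pos hkpos hw0); linarith
  rw [div_le_iff₀ hkpos]
  nlinarith [cs, mul_pos hw0 (by linarith : (0:ℝ) < 1 - w)]


lemma alph_self (k : ℕ) (w : ℝ) : alph k k w = w ^ k := by
  simp [alph]

lemma alph_zero' (k : ℕ) (w : ℝ) : alph k 0 w = (1 - w) ^ k := by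
  simp [alph]

lemma qf_lb {k : ℕ} {p : ℕ → ℝ} (hp : ∀ z ≤ k, p z ∈ Set.Icc (0:ℝ) 1) (hk1 : p k = 1)
    {w : ℝ} (hw0 : 0 ≤ w) (hw1 : w ≤ 1) : w ^ k ≤ qf k p w := by
  rw [qf_eq]
  have := Finset.single_le_sum (f := fun z => alph k z w * p z)
    (fun z hz => mul_nonneg (alph_nonneg hw0 hw1)
      ((hp z (by simpa [Nat.lt_succ_iff] using hz)).1))
    (Finset.self_mem_range_succ k)
  rwa [alph_self, hk1, mul_one] at this

lemma qf_ub {k : ℕ} {p : ℕ → ℝ} (hp : ∀ z ≤ k, p z ∈ Set.Icc (0:ℝ) 1) (h0 : p 0 = 0)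
    {w : ℝ} (hw0 : 0 ≤ w) (hw1 : w ≤ 1) : qf k p w ≤ 1 - (1 - w) ^ k := by
  have key : (1 - w) ^ k ≤ 1 - qf k p w := by
    have h1 : ∑ z ∈ range (k + 1), alph k z w * (1 - p z) = 1 - qf k p w := by
      calc ∑ z ∈ range (k + 1), alph k z w * (1 - p z)
          = ∑ z ∈ range (k + 1), (alph k z w - alph k z w * p z) :=
            Finset.sum_congr rfl fun z _ => by ring
        _ = ∑ z ∈ range (k + 1), alph k z w - ∑ z ∈ range (k + 1), alph k z w * p z :=
            Finset.sum_sub_distrib _ _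
        _ = 1 - qf k p w := by rw [sum_alph, qf_eq]
    rw [← h1]
    have := Finset.single_le_sum (f := fun z => alph k z w * (1 - p z))
      (fun z hz => mul_nonneg (alph_nonneg hw0 hw1)
        (by linarith [(hp z (by simpa [Nat.lt_succ_iff] using hz)).2]))
      (Finset.mem_range.2 (Nat.succ_pos k))
    rwa [alph_zero', h0, sub_zero, mul_one] at this
  linarith

lemma d2_lower {a q : ℝ} (ha0 : 0 ≤ a) (ha1 : a ≤ 1) (hq0 : 0 < q) (hq1 : q < 1) :
    2 * (a - q) ^ 2 / Real.log 2 ≤ d2 a q := by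
  have hlog2 : 0 < Real.log 2 := Real.log_pos (by norm_num)
  have hform : d2 a q
      = (a * Real.log (a / q) + (1 - a) * Real.log ((1 - a) / (1 - q))) / Real.log 2 := by
    unfold d2 Real.logb
    ring
  rw [hform]
  exact (div_le_div_iff_of_pos_right hlog2).2 (pinsker ha0 ha1 hq0 hq1)

lemma d2_nonneg {a q : ℝ} (ha0 : 0 ≤ a) (ha1 : a ≤ 1) (hq0 : 0 < q) (hq1 : q < 1) :
    0 ≤ d2 a q := by
  refine le_trans ?_ (d2_lower ha0 ha1 hq0 hq1)
  positivity

lemma d2_upper {a q : ℝ} (ha0 : 0 ≤ a) (ha1 : a ≤ 1) (hq0 : 0 < q) (hq1 : q < 1) :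
    d2 a q ≤ Real.logb 2 (1 / (q * (1 - q))) := by
  have h1q : (0:ℝ) < 1 - q := by linarith
  have hb : (1:ℝ) < 2 := by norm_num
  have hinvq : 0 ≤ Real.logb 2 (1 / q) := by
    apply Real.logb_nonneg hb
    rw [le_div_iff₀ hq0]; linarith
  have hinv1q : 0 ≤ Real.logb 2 (1 / (1 - q)) := by
    apply Real.logb_nonneg hb
    rw [le_div_iff₀ h1q]; linarith
  have t1 : a * Real.logb 2 (a / q) ≤ Real.logb 2 (1 / q) := by
    rcases eq_or_lt_of_le ha0 with h | h
    · rw [← h]; simpa using hinvq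
    · have : Real.logb 2 (a / q) ≤ Real.logb 2 (1 / q) :=
        Real.logb_le_logb_of_le (by norm_num) (by positivity)
          ((div_le_div_iff_of_pos_right hq0).2 ha1)
      calc a * Real.logb 2 (a / q) ≤ a * Real.logb 2 (1 / q) :=
            mul_le_mul_of_nonneg_left this ha0
        _ ≤ 1 * Real.logb 2 (1 / q) := mul_le_mul_of_nonneg_right ha1 hinvq
        _ = _ := one_mul _
  have t2 : (1 - a) * Real.logb 2 ((1 - a) / (1 - q)) ≤ Real.logb 2 (1 / (1 - q)) := by
    have ha1' : 0 ≤ 1 - a := by linarith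
    rcases eq_or_lt_of_le ha1' with h | h
    · rw [← h]; simpa using hinv1q
    · have : Real.logb 2 ((1 - a) / (1 - q)) ≤ Real.logb 2 (1 / (1 - q)) :=
        Real.logb_le_logb_of_le (by norm_num) (by positivity)
          ((div_le_div_iff_of_pos_right h1q).2 (by linarith))
      calc (1 - a) * Real.logb 2 ((1 - a) / (1 - q))
            ≤ (1 - a) * Real.logb 2 (1 / (1 - q)) := mul_le_mul_of_nonneg_left this ha1'
        _ ≤ 1 * Real.logb 2 (1 / (1 - q)) := mul_le_mul_of_nonneg_right (by linarith) hinv1q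
        _ = _ := one_mul _
  have hcomb : Real.logb 2 (1 / q) + Real.logb 2 (1 / (1 - q))
      = Real.logb 2 (1 / (q * (1 - q))) := by
    rw [← Real.logb_mul (by positivity) (by positivity)]
    congr 1
    field_simp
  calc d2 a q ≤ Real.logb 2 (1 / q) + Real.logb 2 (1 / (1 - q)) := add_le_add t1 t2
    _ = _ := hcomb

lemma chat_eq (k : ℕ) (p : ℕ → ℝ) (w : ℝ) :
    Chat k w p = ∑ z ∈ range (k + 1), alph k z w * d2 (p z) (qf k p w) := by
  unfold Chat
  rw [qf_eq]

section ChatBounds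

variable {k : ℕ} {p : ℕ → ℝ} (hk : 1 ≤ k) (hp : ∀ z ≤ k, p z ∈ Set.Icc (0:ℝ) 1)
  (h0 : p 0 = 0) (hk1 : p k = 1) {w : ℝ} (hw0 : 0 < w) (hw1 : w < 1)
include hk hp h0 hk1 hw0 hw1

lemma qf_mem : qf k p w ∈ Set.Ioo (0:ℝ) 1 := by
  constructor
  · exact lt_of_lt_of_le (pow_pos hw0 k) (qf_lb hp hk1 hw0.le hw1.le)
  · have h1 : (0:ℝ) < (1 - w) ^ k := pow_pos (by linarith) k
    have := qf_ub hp h0 hw0.le hw1.le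
    linarith

lemma chat_lower :
    2 / Real.log 2 * (w * (1 - w) * qd k p w ^ 2 / k) ≤ Chat k w p := by
  obtain ⟨hq0, hq1⟩ := qf_mem hk hp h0 hk1 hw0 hw1
  rw [chat_eq]
  have step : ∀ z ∈ range (k + 1),
      alph k z w * (2 * (p z - qf k p w) ^ 2 / Real.log 2) ≤ alph k z w * d2 (p z) (qf k p w) := by
    intro z hz
    have hz' : z ≤ k := by simpa [Nat.lt_succ_iff] using hz
    exact mul_le_mul_of_nonneg_left
      (d2_lower (hp z hz').1 (hp z hz').2 hq0 hq1) (alph_nonneg hw0.le hw1.le)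
  refine le_trans ?_ (Finset.sum_le_sum step)
  have hrw : ∑ z ∈ range (k + 1), alph k z w * (2 * (p z - qf k p w) ^ 2 / Real.log 2)
      = 2 / Real.log 2 * ∑ z ∈ range (k + 1), alph k z w * (p z - qf k p w) ^ 2 := by
    rw [Finset.mul_sum]
    exact Finset.sum_congr rfl fun z _ => by ring
  rw [hrw]
  have hlog2 : 0 < Real.log 2 := Real.log_pos (by norm_num)
  have hc : 0 < 2 / Real.log 2 := by positivity
  exact mul_le_mul_of_nonneg_left (var_lower hk p hw0 hw1) hc.le

lemma chat_nonneg : 0 ≤ Chat k w p := by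
  refine le_trans ?_ (chat_lower hk hp h0 hk1 hw0 hw1)
  have hlog2 : 0 < Real.log 2 := Real.log_pos (by norm_num)
  have hk' : (0:ℝ) < k := by exact_mod_cast hk
  have : (0:ℝ) ≤ w * (1 - w) * qd k p w ^ 2 / k := by
    apply div_nonneg _ hk'.le
    have : (0:ℝ) ≤ 1 - w := by linarith
    positivity
  positivity

lemma chat_upper : Chat k w p ≤ k * Real.log (1 / (w * (1 - w))) / Real.log 2 := by
  obtain ⟨hq0, hq1⟩ := qf_mem hk hp h0 hk1 hw0 hw1
  set q := qf k p w with hq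
  have h1q : (0:ℝ) < 1 - q := by linarith
  have h1w : (0:ℝ) < 1 - w := by linarith
  have hlog2 : 0 < Real.log 2 := Real.log_pos (by norm_num)
  have step1 : Chat k w p ≤ Real.logb 2 (1 / (q * (1 - q))) := by
    rw [chat_eq]
    calc ∑ z ∈ range (k + 1), alph k z w * d2 (p z) q
        ≤ ∑ z ∈ range (k + 1), alph k z w * Real.logb 2 (1 / (q * (1 - q))) := by
          refine Finset.sum_le_sum fun z hz => ?_
          have hz' : z ≤ k := by simpa [Nat.lt_succ_iff] using hz
          exact mul_le_mul_of_nonneg_left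
            (d2_upper (hp z hz').1 (hp z hz').2 hq0 hq1) (alph_nonneg hw0.le hw1.le)
      _ = Real.logb 2 (1 / (q * (1 - q))) := by
          rw [← Finset.sum_mul, sum_alph, one_mul]
  have step2 : Real.logb 2 (1 / (q * (1 - q))) ≤ k * Real.log (1 / (w * (1 - w))) / Real.log 2 := by
    unfold Real.logb
    rw [div_le_div_iff₀ hlog2 hlog2]
    have key : Real.log ((w * (1 - w)) ^ k) ≤ Real.log (q * (1 - q)) := by
      apply Real.log_le_log (by positivity)
      rw [mul_pow]
      exact mul_le_mul (qf_lb hp hk1 hw0.le hw1.le) (by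
        have := qf_ub hp h0 hw0.le hw1.le
        linarith) (by positivity) (by linarith)
    have e1 : Real.log (1 / (q * (1 - q))) = -Real.log (q * (1 - q)) := by
      rw [one_div, Real.log_inv]
    have e2 : Real.log (1 / (w * (1 - w))) = -Real.log (w * (1 - w)) := by
      rw [one_div, Real.log_inv]
    rw [Real.log_pow] at key
    rw [e1, e2]
    push_cast at key ⊢
    nlinarith [mul_le_mul_of_nonneg_right key hlog2.le]
  exact step1.trans step2

end ChatBounds

end Bern

section Integ

open Real MeasureTheory intervalIntegral Set

noncomputable def W0 (w : ℝ) : ℝ := (Real.sqrt (w * (1 - w)))⁻¹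

lemma integrable_left {f : ℝ → ℝ} {c r : ℝ} (hr : -1 < r)
    (hm : AEStronglyMeasurable f (volume.restrict (Set.uIoc (0:ℝ) (1/2))))
    (hb : ∀ w ∈ Set.Ioc (0:ℝ) (1/2), ‖f w‖ ≤ c * w ^ r) :
    IntervalIntegrable f volume 0 (1/2) := by
  have hg : IntervalIntegrable (fun w : ℝ => c * w ^ r) volume 0 (1/2) :=
    (intervalIntegrable_rpow' hr).const_mul c
  refine hg.mono_fun' hm ?_
  have he : Set.uIoc (0:ℝ) (1/2) = Set.Ioc (0:ℝ) (1/2) := Set.uIoc_of_le (by norm_num)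
  rw [he]
  filter_upwards [ae_restrict_mem measurableSet_Ioc] with w hw
  exact hb w hw

lemma integrable_right {f : ℝ → ℝ} {c r : ℝ} (hr : -1 < r)
    (hm : AEStronglyMeasurable f (volume.restrict (Set.uIoc (1/2:ℝ) 1)))
    (hb : ∀ w ∈ Set.Ioc (1/2:ℝ) 1, ‖f w‖ ≤ c * (1 - w) ^ r) :
    IntervalIntegrable f volume (1/2) 1 := by
  have hg0 : IntervalIntegrable (fun w : ℝ => c * w ^ r) volume 0 (1/2) :=
    (intervalIntegrable_rpow' hr).const_mul c
  have hg : IntervalIntegrable (fun w : ℝ => c * (1 - w) ^ r) volume (1/2) 1 := by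
    have := (hg0.comp_sub_left 1).symm
    norm_num at this
    exact this
  refine hg.mono_fun' hm ?_
  have he : Set.uIoc (1/2:ℝ) 1 = Set.Ioc (1/2:ℝ) 1 := Set.uIoc_of_le (by norm_num)
  rw [he]
  filter_upwards [ae_restrict_mem measurableSet_Ioc] with w hw
  exact hb w hw

lemma W0_nonneg (w : ℝ) : 0 ≤ W0 w := inv_nonneg.2 (Real.sqrt_nonneg _)

lemma W0_measurable : Measurable W0 :=
  ((Real.continuous_sqrt.comp (continuous_id.mul (continuous_const.sub continuous_id))).measurable).inv

lemma rpow_neg_half_eq {w : ℝ} (hw : 0 < w) : w ^ (-(1/2) : ℝ) = (Real.sqrt w)⁻¹ := by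
  rw [Real.rpow_neg hw.le, ← Real.sqrt_eq_rpow]

lemma W0_bound_left {w : ℝ} (hw0 : 0 < w) (hw : w ≤ 1/2) :
    W0 w ≤ Real.sqrt 2 * w ^ (-(1/2) : ℝ) := by
  rw [rpow_neg_half_eq hw0]
  have hu : 0 < w * (1 - w) := by nlinarith
  have hs : 0 < Real.sqrt (w * (1 - w)) := Real.sqrt_pos.2 hu
  have ht : 0 < Real.sqrt w := Real.sqrt_pos.2 hw0
  have h1 : Real.sqrt w ≤ Real.sqrt (2 * (w * (1 - w))) := Real.sqrt_le_sqrt (by nlinarith)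
  rw [Real.sqrt_mul (by norm_num : (0:ℝ) ≤ 2)] at h1
  unfold W0
  rw [show Real.sqrt 2 * (Real.sqrt w)⁻¹ = Real.sqrt 2 / Real.sqrt w by ring,
    show (Real.sqrt (w * (1-w)))⁻¹ = 1 / Real.sqrt (w * (1-w)) by ring,
    div_le_div_iff₀ hs ht]
  nlinarith [Real.sqrt_nonneg (2:ℝ)]

lemma W0_bound_right {w : ℝ} (hw0 : 1/2 < w) (hw : w ≤ 1) :
    W0 w ≤ Real.sqrt 2 * (1 - w) ^ (-(1/2) : ℝ) := by
  rcases eq_or_lt_of_le hw with h1 | h1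
  · subst h1
    unfold W0
    norm_num
  · have h1w : 0 < 1 - w := by linarith
    rw [rpow_neg_half_eq h1w]
    have hu : 0 < w * (1 - w) := by nlinarith
    have hs : 0 < Real.sqrt (w * (1 - w)) := Real.sqrt_pos.2 hu
    have ht : 0 < Real.sqrt (1 - w) := Real.sqrt_pos.2 h1w
    have h2 : Real.sqrt (1 - w) ≤ Real.sqrt (2 * (w * (1 - w))) := Real.sqrt_le_sqrt (by nlinarith)
    rw [Real.sqrt_mul (by norm_num : (0:ℝ) ≤ 2)] at h2
    unfold W0
    rw [show Real.sqrt 2 * (Real.sqrt (1-w))⁻¹ = Real.sqrt 2 / Real.sqrt (1-w) by ring,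
      show (Real.sqrt (w * (1-w)))⁻¹ = 1 / Real.sqrt (w * (1-w)) by ring,
      div_le_div_iff₀ hs ht]
    nlinarith [Real.sqrt_nonneg (2:ℝ)]

lemma W0_integrable : IntervalIntegrable W0 volume 0 1 := by
  have hl : IntervalIntegrable W0 volume 0 (1/2) := by
    refine integrable_left (c := Real.sqrt 2) (r := -(1/2)) (by norm_num) W0_measurable.aestronglyMeasurable ?_
    intro w hw
    rw [Real.norm_eq_abs, abs_of_nonneg (W0_nonneg w)]
    exact W0_bound_left hw.1 hw.2
  have hr : IntervalIntegrable W0 volume (1/2) 1 := by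
    refine integrable_right (c := Real.sqrt 2) (r := -(1/2)) (by norm_num) W0_measurable.aestronglyMeasurable ?_
    intro w hw
    rw [Real.norm_eq_abs, abs_of_nonneg (W0_nonneg w)]
    exact W0_bound_right hw.1 hw.2
  exact hl.trans hr

lemma W0_integral : ∫ w in (0:ℝ)..1, W0 w = Real.pi := by
  have hcont : ContinuousOn (fun w : ℝ => Real.arcsin (2 * w - 1)) (Set.Icc 0 1) :=
    (Real.continuous_arcsin.comp (by continuity)).continuousOn
  have hderiv : ∀ x ∈ Set.Ioo (0:ℝ) 1,
      HasDerivWithinAt (fun w : ℝ => Real.arcsin (2 * w - 1)) (W0 x) (Set.Ioi x) x := by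
    intro x hx
    have h1 : (2 * x - 1) ≠ -1 := by intro h; exact hx.1.ne' (by linarith)
    have h2 : (2 * x - 1) ≠ 1 := by intro h; exact hx.2.ne (by linarith)
    have hin : HasDerivAt (fun w : ℝ => 2 * w - 1) 2 x := by
      simpa using ((hasDerivAt_id x).const_mul (2:ℝ)).sub_const 1
    have houter := Real.hasDerivAt_arcsin h1 h2
    have hcomp := houter.comp x hin
    have heq : 1 / Real.sqrt (1 - (2 * x - 1) ^ 2) * 2 = W0 x := by
      have e1 : 1 - (2 * x - 1) ^ 2 = 4 * (x * (1 - x)) := by ring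
      have hu : 0 < x * (1 - x) := by nlinarith [hx.1, hx.2]
      have e2 : Real.sqrt (4 * (x * (1 - x))) = 2 * Real.sqrt (x * (1 - x)) := by
        rw [show (4:ℝ) * (x * (1-x)) = 2^2 * (x * (1-x)) by norm_num,
          Real.sqrt_mul (by positivity), Real.sqrt_sq (by norm_num : (0:ℝ) ≤ 2)]
      have hs : 0 < Real.sqrt (x * (1 - x)) := Real.sqrt_pos.2 hu
      rw [e1, e2]
      unfold W0
      field_simp
    rw [heq] at hcomp
    exact hcomp.hasDerivWithinAt
  have := integral_eq_sub_of_hasDeriv_right_of_le (by norm_num : (0:ℝ) ≤ 1) hcont hderiv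
    W0_integrable
  rw [this]
  norm_num [Real.arcsin_one, Real.arcsin_neg_one]

end Integ

open MeasureTheory intervalIntegral

lemma alph_cont (k z : ℕ) : Continuous (fun w => alph k z w) := by
  unfold alph
  exact ((continuous_const.mul (continuous_pow z)).mul
    ((continuous_const.sub continuous_id).pow (k - z)))

lemma qd_cont (k : ℕ) (p : ℕ → ℝ) : Continuous (fun w => qd k p w) :=
  (Polynomial.derivative (Qpoly k p)).continuous

lemma qf_zero {k : ℕ} {p : ℕ → ℝ} (h0 : p 0 = 0) : qf k p 0 = 0 := by
  rw [qf_eq, Finset.sum_eq_single 0]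
  · simp [alph, h0]
  · intro z hz hne
    simp [alph, zero_pow hne]
  · intro h
    exact absurd (Finset.mem_range.2 (Nat.succ_pos k)) h

lemma qf_one {k : ℕ} {p : ℕ → ℝ} (hk1 : p k = 1) : qf k p 1 = 1 := by
  rw [qf_eq, Finset.sum_eq_single k]
  · simp [alph, hk1]
  · intro z hz hne
    have hzk : z < k := by
      rw [Finset.mem_range] at hz; omega
    have : k - z ≠ 0 := Nat.sub_ne_zero_of_lt hzk
    simp [alph, zero_pow this]
  · intro h
    exact absurd (Finset.self_mem_range_succ k) h

lemma integral_qd {k : ℕ} {p : ℕ → ℝ} (h0 : p 0 = 0) (hk1 : p k = 1) :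
    ∫ w in (0:ℝ)..1, qd k p w = 1 := by
  have key : ∫ w in (0:ℝ)..1, qd k p w = qf k p 1 - qf k p 0 := by
    apply integral_eq_sub_of_hasDerivAt (f := fun w => qf k p w) (f' := fun w => qd k p w)
    · intro x _
      exact (Qpoly k p).hasDerivAt x
    · exact ((qd_cont k p).intervalIntegrable 0 1)
  rw [key, qf_one hk1, qf_zero h0]
  norm_num

lemma ae_Ioo : ∀ᵐ w ∂(volume.restrict (Set.Icc (0:ℝ) 1)), w ∈ Set.Ioo (0:ℝ) 1 := by
  have h0 : ∀ᵐ (w : ℝ) ∂(volume.restrict (Set.Icc (0:ℝ) 1)), w ≠ 0 :=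
    ae_restrict_of_ae (compl_mem_ae_iff.2 (measure_singleton 0))
  have h1 : ∀ᵐ (w : ℝ) ∂(volume.restrict (Set.Icc (0:ℝ) 1)), w ≠ 1 :=
    ae_restrict_of_ae (compl_mem_ae_iff.2 (measure_singleton 1))
  have hmem : ∀ᵐ (w : ℝ) ∂(volume.restrict (Set.Icc (0:ℝ) 1)), w ∈ Set.Icc (0:ℝ) 1 :=
    ae_restrict_mem measurableSet_Icc
  filter_upwards [h0, h1, hmem] with w hw0 hw1 hmem'
  exact ⟨lt_of_le_of_ne hmem'.1 (Ne.symm hw0), lt_of_le_of_ne hmem'.2 hw1⟩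

lemma amgm_pt (x s : ℝ) (hs : 0 < s) :
    x ≤ Real.pi / 2 * (x ^ 2 * s) + 1 / (2 * Real.pi) * s⁻¹ := by
  have hπ := Real.pi_pos
  rw [show Real.pi / 2 * (x ^ 2 * s) + 1 / (2 * Real.pi) * s⁻¹
      = (Real.pi ^ 2 * s ^ 2 * x ^ 2 + 1) / (2 * Real.pi * s) by field_simp]
  rw [le_div_iff₀ (by positivity)]
  nlinarith [sq_nonneg (Real.pi * s * x - 1)]

lemma A_lower {k : ℕ} {p : ℕ → ℝ} (h0 : p 0 = 0) (hk1 : p k = 1) :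
    1 / Real.pi ≤ ∫ w in (0:ℝ)..1, qd k p w ^ 2 * Real.sqrt (w * (1 - w)) := by
  have hπ := Real.pi_pos
  have hsq : Continuous (fun w : ℝ => qd k p w ^ 2 * Real.sqrt (w * (1 - w))) :=
    ((qd_cont k p).pow 2).mul
      (Real.continuous_sqrt.comp (continuous_id.mul (continuous_const.sub continuous_id)))
  have hAint : IntervalIntegrable (fun w : ℝ => qd k p w ^ 2 * Real.sqrt (w * (1 - w)))
      volume 0 1 := hsq.intervalIntegrable 0 1
  have hRint : IntervalIntegrable
      (fun w : ℝ => Real.pi / 2 * (qd k p w ^ 2 * Real.sqrt (w * (1 - w)))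
        + 1 / (2 * Real.pi) * W0 w) volume 0 1 :=
    (hAint.const_mul _).add (W0_integrable.const_mul _)
  have hmono : ∫ w in (0:ℝ)..1, qd k p w
      ≤ ∫ w in (0:ℝ)..1, (Real.pi / 2 * (qd k p w ^ 2 * Real.sqrt (w * (1 - w)))
        + 1 / (2 * Real.pi) * W0 w) := by
    refine integral_mono_ae_restrict zero_le_one ((qd_cont k p).intervalIntegrable 0 1) hRint ?_
    filter_upwards [ae_Ioo] with w hw
    have hu : 0 < w * (1 - w) := by nlinarith [hw.1, hw.2]
    have hs : 0 < Real.sqrt (w * (1 - w)) := Real.sqrt_pos.2 hu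
    exact amgm_pt (qd k p w) _ hs
  rw [integral_qd h0 hk1, integral_add (hAint.const_mul _) (W0_integrable.const_mul _),
    intervalIntegral.integral_const_mul, intervalIntegral.integral_const_mul, W0_integral] at hmono
  have he : 1 / (2 * Real.pi) * Real.pi = 1 / 2 := by field_simp
  rw [he] at hmono
  rw [div_le_iff₀ hπ]
  nlinarith

lemma chat_measurable (k : ℕ) (p : ℕ → ℝ) : Measurable (fun w => Chat k w p) := by
  have hqm : Measurable (fun w => ∑ z' ∈ Finset.range (k + 1), alph k z' w * p z') := by
    apply Finset.measurable_sum
    intro z' _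
    exact ((alph_cont k z').measurable).mul measurable_const
  unfold Chat d2 Real.logb
  apply Finset.measurable_sum
  intro z _
  apply Measurable.mul (alph_cont k z).measurable
  apply Measurable.add
  · exact measurable_const.mul
      ((Real.measurable_log.comp (measurable_const.div hqm)).div measurable_const)
  · exact measurable_const.mul
      ((Real.measurable_log.comp (measurable_const.div
        (measurable_const.sub hqm))).div measurable_const)

section MainBounds

variable {k : ℕ} {p : ℕ → ℝ} (hk : 1 ≤ k) (hp : ∀ z ≤ k, p z ∈ Set.Icc (0:ℝ) 1)
  (h0 : p 0 = 0) (hk1 : p k = 1)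
include hk hp h0 hk1

lemma M_bound {w : ℝ} (hw0 : 0 < w) (hw1 : w < 1) :
    Chat k w p * (1 / (Real.pi * Real.sqrt (w * (1 - w))))
      ≤ (4 * k / (Real.pi * Real.log 2)) * (w * (1 - w)) ^ (-(3/4) : ℝ) := by
  have hu : 0 < w * (1 - w) := by nlinarith
  have hlog2 : 0 < Real.log 2 := Real.log_pos (by norm_num)
  have hπ := Real.pi_pos
  set u := w * (1 - w) with hudef
  have hW : (1:ℝ) / (Real.pi * Real.sqrt u) = (1 / Real.pi) * u ^ (-(1/2) : ℝ) := by
    rw [Real.rpow_neg hu.le, ← Real.sqrt_eq_rpow]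
    field_simp
  have h1 : Chat k w p ≤ (k : ℝ) * Real.log (1 / u) / Real.log 2 :=
    chat_upper hk hp h0 hk1 hw0 hw1
  have h2 : Real.log (1 / u) ≤ 4 * u ^ (-(1/4) : ℝ) := by
    have e : Real.log (u ^ (-(1/4) : ℝ)) = -(1/4) * Real.log u := Real.log_rpow hu _
    have hle : Real.log (u ^ (-(1/4) : ℝ)) ≤ u ^ (-(1/4) : ℝ) := by
      have := Real.log_le_sub_one_of_pos (Real.rpow_pos_of_pos hu (-(1/4)))
      linarith
    rw [one_div, Real.log_inv]
    linarith
  have hWpos : 0 ≤ (1:ℝ) / (Real.pi * Real.sqrt u) := by positivity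
  have hupos4 : (0:ℝ) ≤ u ^ (-(1/4) : ℝ) := (Real.rpow_pos_of_pos hu _).le
  calc Chat k w p * (1 / (Real.pi * Real.sqrt u))
      ≤ ((k : ℝ) * Real.log (1 / u) / Real.log 2) * (1 / (Real.pi * Real.sqrt u)) :=
        mul_le_mul_of_nonneg_right h1 hWpos
    _ ≤ ((k : ℝ) * (4 * u ^ (-(1/4) : ℝ)) / Real.log 2) * (1 / (Real.pi * Real.sqrt u)) := by
        refine mul_le_mul_of_nonneg_right ((div_le_div_iff_of_pos_right hlog2).2 ?_) hWpos
        exact mul_le_mul_of_nonneg_left h2 (Nat.cast_nonneg k)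
    _ = (4 * k / (Real.pi * Real.log 2)) * (u ^ (-(1/4) : ℝ) * u ^ (-(1/2) : ℝ)) := by
        rw [hW]; ring
    _ = (4 * k / (Real.pi * Real.log 2)) * u ^ (-(3/4) : ℝ) := by
        rw [← Real.rpow_add hu]
        norm_num

lemma M_nonneg {w : ℝ} (hw0 : 0 < w) (hw1 : w < 1) :
    0 ≤ Chat k w p * (1 / (Real.pi * Real.sqrt (w * (1 - w)))) := by
  apply mul_nonneg (chat_nonneg hk hp h0 hk1 hw0 hw1)
  positivity

lemma M_measurable {s : Set ℝ} : AEStronglyMeasurable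
    (fun w => Chat k w p * (1 / (Real.pi * Real.sqrt (w * (1 - w)))))
    (volume.restrict s) := by
  apply Measurable.aestronglyMeasurable
  exact (chat_measurable k p).mul
    (measurable_const.div (measurable_const.mul
      ((Real.continuous_sqrt.comp (continuous_id.mul (continuous_const.sub continuous_id))).measurable)))

lemma M_integrable : IntervalIntegrable
    (fun w => Chat k w p * (1 / (Real.pi * Real.sqrt (w * (1 - w))))) volume 0 1 := by
  have hlog2 : 0 < Real.log 2 := Real.log_pos (by norm_num)
  have hπ := Real.pi_pos
  set c : ℝ := 4 * k / (Real.pi * Real.log 2) with hc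
  have hcpos : 0 ≤ c := by positivity
  have hl : IntervalIntegrable
      (fun w => Chat k w p * (1 / (Real.pi * Real.sqrt (w * (1 - w))))) volume 0 (1/2) := by
    refine integrable_left (c := 2 * c) (r := -(3/4)) (by norm_num)
      (M_measurable hk hp h0 hk1) ?_
    intro w hw
    have hw1 : w < 1 := lt_of_le_of_lt hw.2 (by norm_num)
    rw [Real.norm_eq_abs, abs_of_nonneg (M_nonneg hk hp h0 hk1 hw.1 hw1)]
    refine le_trans (M_bound hk hp h0 hk1 hw.1 hw1) ?_
    have hh : (w * (1 - w)) ^ (-(3/4) : ℝ) ≤ 2 * w ^ (-(3/4) : ℝ) := by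
      have h1 : w / 2 ≤ w * (1 - w) := by nlinarith [hw.1, hw.2]
      have h2 : (w * (1 - w)) ^ (-(3/4) : ℝ) ≤ (w / 2) ^ (-(3/4) : ℝ) :=
        Real.rpow_le_rpow_of_nonpos (by linarith [hw.1]) h1 (by norm_num)
      have h3 : (w / 2) ^ (-(3/4) : ℝ) = w ^ (-(3/4) : ℝ) / 2 ^ (-(3/4) : ℝ) :=
        Real.div_rpow hw.1.le (by norm_num) _
      have h4 : (2:ℝ) ^ (-(3/4) : ℝ) = ((2:ℝ) ^ ((3/4) : ℝ))⁻¹ := Real.rpow_neg (by norm_num) _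
      have h5 : (1:ℝ) ≤ (2:ℝ) ^ ((3/4) : ℝ) := by
        have := Real.rpow_le_rpow_of_exponent_le (by norm_num : (1:ℝ) ≤ 2)
          (by norm_num : (0:ℝ) ≤ 3/4)
        rwa [Real.rpow_zero] at this
      have h6 : (2:ℝ) ^ ((3/4) : ℝ) ≤ 2 := by
        have := Real.rpow_le_rpow_of_exponent_le (by norm_num : (1:ℝ) ≤ 2)
          (by norm_num : ((3:ℝ)/4) ≤ 1)
        rwa [Real.rpow_one] at this
      have hwpos : (0:ℝ) ≤ w ^ (-(3/4) : ℝ) := (Real.rpow_pos_of_pos hw.1 _).le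
      rw [h3, h4, div_inv_eq_mul] at h2
      nlinarith
    calc c * (w * (1 - w)) ^ (-(3/4) : ℝ) ≤ c * (2 * w ^ (-(3/4) : ℝ)) :=
          mul_le_mul_of_nonneg_left hh hcpos
      _ = 2 * c * w ^ (-(3/4) : ℝ) := by ring
  have hr : IntervalIntegrable
      (fun w => Chat k w p * (1 / (Real.pi * Real.sqrt (w * (1 - w))))) volume (1/2) 1 := by
    refine integrable_right (c := 2 * c) (r := -(3/4)) (by norm_num)
      (M_measurable hk hp h0 hk1) ?_
    intro w hw
    have hw0 : 0 < w := lt_trans (by norm_num) hw.1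
    rcases eq_or_lt_of_le hw.2 with h1 | h1
    · rw [← h1]
      norm_num [Real.zero_rpow]
    · rw [Real.norm_eq_abs, abs_of_nonneg (M_nonneg hk hp h0 hk1 hw0 h1)]
      refine le_trans (M_bound hk hp h0 hk1 hw0 h1) ?_
      have hh : (w * (1 - w)) ^ (-(3/4) : ℝ) ≤ 2 * (1 - w) ^ (-(3/4) : ℝ) := by
        have h1w : 0 < 1 - w := by linarith
        have hle : (1 - w) / 2 ≤ w * (1 - w) := by nlinarith [hw.1]
        have h2 : (w * (1 - w)) ^ (-(3/4) : ℝ) ≤ ((1 - w) / 2) ^ (-(3/4) : ℝ) :=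
          Real.rpow_le_rpow_of_nonpos (by linarith) hle (by norm_num)
        have h3 : ((1 - w) / 2) ^ (-(3/4) : ℝ) = (1 - w) ^ (-(3/4) : ℝ) / 2 ^ (-(3/4) : ℝ) :=
          Real.div_rpow h1w.le (by norm_num) _
        have h4 : (2:ℝ) ^ (-(3/4) : ℝ) = ((2:ℝ) ^ ((3/4) : ℝ))⁻¹ := Real.rpow_neg (by norm_num) _
        have h5 : (1:ℝ) ≤ (2:ℝ) ^ ((3/4) : ℝ) := by
          have := Real.rpow_le_rpow_of_exponent_le (by norm_num : (1:ℝ) ≤ 2)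
            (by norm_num : (0:ℝ) ≤ 3/4)
          rwa [Real.rpow_zero] at this
        have h6 : (2:ℝ) ^ ((3/4) : ℝ) ≤ 2 := by
          have := Real.rpow_le_rpow_of_exponent_le (by norm_num : (1:ℝ) ≤ 2)
            (by norm_num : ((3:ℝ)/4) ≤ 1)
          rwa [Real.rpow_one] at this
        have hwpos : (0:ℝ) ≤ (1 - w) ^ (-(3/4) : ℝ) := (Real.rpow_pos_of_pos h1w _).le
        rw [h3, h4, div_inv_eq_mul] at h2
        nlinarith
      calc c * (w * (1 - w)) ^ (-(3/4) : ℝ) ≤ c * (2 * (1 - w) ^ (-(3/4) : ℝ)) :=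
            mul_le_mul_of_nonneg_left hh hcpos
        _ = 2 * c * (1 - w) ^ (-(3/4) : ℝ) := by ring
  exact hl.trans hr

end MainBounds

theorem capacity_lower_bound' (k : ℕ) (hk : 1 ≤ k) (p : ℕ → ℝ)
    (hp : ∀ z ≤ k, p z ∈ Set.Icc (0 : ℝ) 1) (h0 : p 0 = 0) (hk1 : p k = 1) :
    (1 / (k : ℝ)) *
        ∫ w in (0:ℝ)..1, Chat k w p * (1 / (Real.pi * Real.sqrt (w * (1 - w))))
      ≥ 2 / (k ^ 2 * Real.pi ^ 2 * Real.log 2) := by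
  have hπ := Real.pi_pos
  have hlog2 : 0 < Real.log 2 := Real.log_pos (by norm_num)
  have hkpos : (0:ℝ) < k := by exact_mod_cast hk
  have hsq : Continuous (fun w : ℝ => qd k p w ^ 2 * Real.sqrt (w * (1 - w))) :=
    ((qd_cont k p).pow 2).mul
      (Real.continuous_sqrt.comp (continuous_id.mul (continuous_const.sub continuous_id)))
  have hLint : IntervalIntegrable
      (fun w : ℝ => 2 / ((k : ℝ) * Real.pi * Real.log 2)
        * (qd k p w ^ 2 * Real.sqrt (w * (1 - w)))) volume 0 1 :=
    (hsq.intervalIntegrable 0 1).const_mul _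
  have hMint := M_integrable hk hp h0 hk1
  have hLM : (∫ w in (0:ℝ)..1, 2 / ((k : ℝ) * Real.pi * Real.log 2)
        * (qd k p w ^ 2 * Real.sqrt (w * (1 - w))))
      ≤ ∫ w in (0:ℝ)..1, Chat k w p * (1 / (Real.pi * Real.sqrt (w * (1 - w)))) := by
    refine integral_mono_ae_restrict zero_le_one hLint hMint ?_
    filter_upwards [ae_Ioo] with w hw
    have hu : 0 < w * (1 - w) := by nlinarith [hw.1, hw.2]
    have hs : 0 < Real.sqrt (w * (1 - w)) := Real.sqrt_pos.2 hu
    have hW : (0:ℝ) < 1 / (Real.pi * Real.sqrt (w * (1 - w))) := by positivity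
    have h := chat_lower hk hp h0 hk1 hw.1 hw.2
    have key := mul_le_mul_of_nonneg_right h hW.le
    set s := Real.sqrt (w * (1 - w)) with hsdef
    have hs2 : s * s = w * (1 - w) := Real.mul_self_sqrt hu.le
    have hsne : s ≠ 0 := hs.ne'
    refine le_trans (le_of_eq ?_) key
    rw [← hs2]
    field_simp
  have hLeq : (∫ w in (0:ℝ)..1, 2 / ((k : ℝ) * Real.pi * Real.log 2)
        * (qd k p w ^ 2 * Real.sqrt (w * (1 - w))))
      = 2 / ((k : ℝ) * Real.pi * Real.log 2)
        * ∫ w in (0:ℝ)..1, qd k p w ^ 2 * Real.sqrt (w * (1 - w)) :=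
    integral_const_mul _ _
  have hA := A_lower (k := k) (p := p) h0 hk1
  have hI : 2 / ((k : ℝ) * Real.pi * Real.log 2) * (1 / Real.pi)
      ≤ ∫ w in (0:ℝ)..1, Chat k w p * (1 / (Real.pi * Real.sqrt (w * (1 - w)))) := by
    refine le_trans ?_ hLM
    rw [hLeq]
    exact mul_le_mul_of_nonneg_left hA (by positivity)
  rw [ge_iff_le]
  have efin : 2 / ((k:ℝ) ^ 2 * Real.pi ^ 2 * Real.log 2)
      = (1 / (k : ℝ)) * (2 / ((k : ℝ) * Real.pi * Real.log 2) * (1 / Real.pi)) := by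
    field_simp
  rw [efin]
  exact mul_le_mul_of_nonneg_left hI (by positivity)


theorem capacity_lower_bound (k : ℕ) (hk : 1 ≤ k) (p : ℕ → ℝ)
    (hp : ∀ z ≤ k, p z ∈ Set.Icc (0 : ℝ) 1) (h0 : p 0 = 0) (hk1 : p k = 1) :
    (1 / (k : ℝ)) *
        ∫ w in (0:ℝ)..1, Chat k w p * (1 / (Real.pi * Real.sqrt (w * (1 - w))))
      ≥ 2 / (k ^ 2 * Real.pi ^ 2 * Real.log 2) := by
  exact capacity_lower_bound' k hk p hp h0 hk1
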